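/- Decreasing demands preserves competitiveness: consider two instances on the same objects Ω, buyers N, supplies b and valuations v, with demand vectors d and d_new satisfying d j ≤ d_new j for all j ∈ N. If a price vector p is competitive for the instance with demands d_new, then p is competitive for the instance with demands d. -/
import Mathlib


open Finset

section MarketDefs

variable {Ω N : Type*}

/-- A bundle for a buyer with demand `dj`: at most `b i` copies of each object,
at most `dj` items in total. -/
def IsBundle [Fintype Ω] (b : Ω → ℕ) (dj : ℕ) (y : Ω → ℕ) : Prop :=
  (∀ i, y i ≤ b i) ∧ ∑ i, y i ≤ dj

/-- Utility of bundle `y` at prices `p` for a buyer with per-unit valuations `v`. -/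
noncomputable def utility [Fintype Ω] (v : Ω → ℕ) (p : Ω → ℝ) (y : Ω → ℕ) : ℝ :=
  ∑ i, ((v i : ℝ) - p i) * (y i : ℝ)

/-- `y` is a preferred bundle (member of the demand set `D_j(p)`). -/
def InDemand [Fintype Ω] (b : Ω → ℕ) (dj : ℕ) (v : Ω → ℕ) (p : Ω → ℝ) (y : Ω → ℕ) : Prop :=
  IsBundle b dj y ∧ ∀ z, IsBundle b dj z → utility v p z ≤ utility v p y

/-- Feasible allocation. -/
def Feasible [Fintype Ω] [Fintype N] (b : Ω → ℕ) (d : N → ℕ) (x : Ω → N → ℕ) : Prop :=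
  (∀ i, ∑ j, x i j ≤ b i) ∧ ∀ j, ∑ i, x i j ≤ d j

/-- Stable allocation at prices `p`: feasible, and every buyer gets a preferred bundle. -/
def Stable [Fintype Ω] [Fintype N] (b : Ω → ℕ) (d : N → ℕ) (v : Ω → N → ℕ)
    (p : Ω → ℝ) (x : Ω → N → ℕ) : Prop :=
  Feasible b d x ∧ ∀ j, InDemand b (d j) (fun i => v i j) p (fun i => x i j)

/-- Competitive price vector: nonnegative, and some allocation is stable for it. -/
def Competitive [Fintype Ω] [Fintype N] (b : Ω → ℕ) (d : N → ℕ) (v : Ω → N → ℕ)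
    (p : Ω → ℝ) : Prop :=
  (∀ i, 0 ≤ p i) ∧ ∃ x, Stable b d v p x

/-- Walrasian price vector: some stable allocation sells as much as possible. -/
def Walrasian [Fintype Ω] [Fintype N] (b : Ω → ℕ) (d : N → ℕ) (v : Ω → N → ℕ)
    (p : Ω → ℝ) : Prop :=
  (∀ i, 0 ≤ p i) ∧ ∃ x, Stable b d v p x ∧
    ∑ i, ∑ j, x i j = min (∑ i, b i) (∑ j, d j)

/-- Componentwise minimum Walrasian price vector. -/
def MinWalrasian [Fintype Ω] [Fintype N] (b : Ω → ℕ) (d : N → ℕ) (v : Ω → N → ℕ)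
    (p : Ω → ℝ) : Prop :=
  Walrasian b d v p ∧ ∀ q, Walrasian b d v q → ∀ i, p i ≤ q i

end MarketDefs

section Aux

variable {Ω : Type*} [Fintype Ω]

open Classical in
lemma utility_update (v : Ω → ℕ) (p : Ω → ℝ) (y : Ω → ℕ) (i₀ : Ω) (a : ℕ) :
    utility v p (Function.update y i₀ a) =
      utility v p y + ((v i₀ : ℝ) - p i₀) * ((a : ℝ) - (y i₀ : ℝ)) := by
  classical
  unfold utility
  have h : ∀ i : Ω, ((v i : ℝ) - p i) * ((Function.update y i₀ a i : ℕ) : ℝ)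
      = Function.update (fun i => ((v i : ℝ) - p i) * (y i : ℝ)) i₀
          (((v i₀ : ℝ) - p i₀) * (a : ℝ)) i := by
    intro i
    by_cases hi : i = i₀
    · subst hi; simp
    · simp [Function.update, hi]
  simp_rw [h]
  rw [Finset.sum_update_of_mem (Finset.mem_univ i₀),
    ← Finset.sum_erase_add _ _ (Finset.mem_univ i₀), Finset.erase_eq]
  ring

open Classical in
lemma sum_update_nat (y : Ω → ℕ) (i₀ : Ω) (a : ℕ) :
    ∑ i, Function.update y i₀ a i = a + ∑ i ∈ Finset.univ.erase i₀, y i := by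
  classical
  rw [Finset.sum_update_of_mem (Finset.mem_univ i₀), Finset.erase_eq]

/-- One-step demand decrease: an optimal bundle at capacity `c+1` contains an
optimal bundle at capacity `c`. -/
lemma one_step (b : Ω → ℕ) (v : Ω → ℕ) (p : Ω → ℝ) (c : ℕ) (y : Ω → ℕ)
    (hy : InDemand b (c + 1) v p y) :
    ∃ y', (∀ i, y' i ≤ y i) ∧ InDemand b c v p y' := by
  classical
  obtain ⟨⟨hyb, hys⟩, hopt⟩ := hy
  by_cases hc : ∑ i, y i ≤ c
  · refine ⟨y, fun i => le_rfl, ⟨⟨hyb, hc⟩, fun z hz => hopt z ⟨hz.1, hz.2.trans (Nat.le_succ c)⟩⟩⟩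
  · have hsum : ∑ i, y i = c + 1 := le_antisymm hys (Nat.succ_le_of_lt (Nat.lt_of_not_le hc))
    -- support of y is nonempty
    have hSne : (Finset.univ.filter (fun i => 1 ≤ y i)).Nonempty := by
      by_contra h
      rw [Finset.not_nonempty_iff_eq_empty] at h
      have : ∑ i, y i = 0 := by
        apply Finset.sum_eq_zero
        intro i _
        by_contra h0
        have : i ∈ Finset.univ.filter (fun i => 1 ≤ y i) := by
          simp [Nat.one_le_iff_ne_zero, h0]
        rw [h] at this
        exact absurd this (Finset.notMem_empty i)
      omega
    -- pick a minimum-margin unit in the support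
    obtain ⟨i₀, hi₀mem, hi₀min⟩ :=
      Finset.exists_min_image (Finset.univ.filter (fun i => 1 ≤ y i))
        (fun i => (v i : ℝ) - p i) hSne
    have hyi₀ : 1 ≤ y i₀ := (Finset.mem_filter.mp hi₀mem).2
    set y' := Function.update y i₀ (y i₀ - 1) with hy'def
    have hy'le : ∀ i, y' i ≤ y i := by
      intro i
      by_cases hi : i = i₀
      · subst hi; simp only [hy'def, Function.update_self]; omega
      · simp [hy'def, Function.update, hi]
    have hy'sum : ∑ i, y' i = c := by
      rw [hy'def, sum_update_nat]
      have := Finset.sum_erase_add Finset.univ y (Finset.mem_univ i₀)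
      omega
    have hy'util : utility v p y' = utility v p y - ((v i₀ : ℝ) - p i₀) := by
      rw [hy'def, utility_update]
      have : ((y i₀ - 1 : ℕ) : ℝ) = (y i₀ : ℝ) - 1 := by
        have : (1 : ℕ) ≤ y i₀ := hyi₀
        push_cast [Nat.cast_sub hyi₀]
        ring
      rw [this]; ring
    refine ⟨y', hy'le, ⟨⟨fun i => (hy'le i).trans (hyb i), hy'sum.le⟩, ?_⟩⟩
    intro z hz
    -- find i* with z i* < b i* and margin ≥ margin of i₀
    have hzexists : ∃ i, z i < b i ∧ (v i₀ : ℝ) - p i₀ ≤ (v i : ℝ) - p i := by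
      by_contra h
      push_neg at h
      -- then z i = b i for all i in the support of y
      have hfull : ∀ i ∈ Finset.univ.filter (fun i => 1 ≤ y i), y i ≤ z i := by
        intro i hi
        have hmin := hi₀min i hi
        by_contra hlt
        push_neg at hlt
        have hzb : z i < b i := lt_of_lt_of_le hlt (hyb i)
        exact absurd hmin (not_le.mpr (h i hzb))
      have hzsum : c + 1 ≤ ∑ i, z i := by
        calc c + 1 = ∑ i, y i := hsum.symm
        _ = ∑ i ∈ Finset.univ.filter (fun i => 1 ≤ y i), y i :=
            (Finset.sum_filter_of_ne (fun i _ h0 => by omega)).symm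
        _ ≤ ∑ i ∈ Finset.univ.filter (fun i => 1 ≤ y i), z i :=
            Finset.sum_le_sum hfull
        _ ≤ ∑ i, z i := Finset.sum_le_sum_of_subset (Finset.filter_subset _ _)
      have := hz.2
      omega
    obtain ⟨iS, hiSb, hiSm⟩ := hzexists
    set z' := Function.update z iS (z iS + 1) with hz'def
    have hz'bundle : IsBundle b (c + 1) z' := by
      constructor
      · intro i
        by_cases hi : i = iS
        · subst hi; simp [hz'def]; omega
        · simp [hz'def, Function.update, hi]; exact hz.1 i
      · rw [hz'def, sum_update_nat]
        have := Finset.sum_erase_add Finset.univ z (Finset.mem_univ iS)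
        have := hz.2
        omega
    have hz'util : utility v p z' = utility v p z + ((v iS : ℝ) - p iS) := by
      rw [hz'def, utility_update]
      push_cast
      ring
    have := hopt z' hz'bundle
    rw [hz'util] at this
    rw [hy'util]
    linarith

/-- Any optimal bundle at a larger capacity contains an optimal bundle at a
smaller capacity. -/
lemma demand_decrease (b : Ω → ℕ) (v : Ω → ℕ) (p : Ω → ℝ) :
    ∀ (k dj : ℕ) (y : Ω → ℕ), InDemand b (dj + k) v p y →
      ∃ y', (∀ i, y' i ≤ y i) ∧ InDemand b dj v p y' := by
  intro k
  induction k with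
  | zero => exact fun dj y hy => ⟨y, fun i => le_rfl, hy⟩
  | succ n ih =>
    intro dj y hy
    have : dj + (n + 1) = (dj + n) + 1 := by ring
    rw [this] at hy
    obtain ⟨y₁, hy₁le, hy₁⟩ := one_step b v p (dj + n) y hy
    obtain ⟨y', hy'le, hy'⟩ := ih dj y₁ hy₁
    exact ⟨y', fun i => (hy'le i).trans (hy₁le i), hy'⟩

end Aux

/-- decreasing the demands preserves competitiveness of a price vector. -/
theorem competitive_of_demand_decrease
    {Ω N : Type*} [Fintype Ω] [Fintype N]
    (v : Ω → N → ℕ) (b : Ω → ℕ) (d dnew : N → ℕ)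
    (hd : ∀ j, d j ≤ dnew j)
    (p : Ω → ℝ) (hcomp : Competitive b dnew v p) :
    Competitive b d v p := by
  obtain ⟨hp, x, ⟨⟨hxb, hxd⟩, hxdem⟩⟩ := hcomp
  refine ⟨hp, ?_⟩
  have hchoice : ∀ j : N, ∃ y' : Ω → ℕ, (∀ i, y' i ≤ x i j) ∧
      InDemand b (d j) (fun i => v i j) p y' := by
    intro j
    have heq : d j + (dnew j - d j) = dnew j := by
      have := hd j; omega
    have := hxdem j
    rw [← heq] at this
    exact demand_decrease b (fun i => v i j) p (dnew j - d j) (d j) _ this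
  choose y' hy'le hy'dem using hchoice
  refine ⟨fun i j => y' j i, ⟨⟨?_, ?_⟩, ?_⟩⟩
  · intro i
    exact le_trans (Finset.sum_le_sum fun j _ => hy'le j i) (hxb i)
  · intro j
    exact (hy'dem j).1.2
  · intro j
    exact hy'dem j
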